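/- Let p be a prime, let a, c ∈ ℚ_p^× and u ∈ ℚ_p, and set b = (a 0; a⁻¹c a⁻¹), n = (1 u; 0 1) and w = (0 −1; 1 0) in SL₂(ℚ_p). If a + u·a⁻¹·c ≠ 0, then σ(n, b) · σ(w, n·b) = (−a·c, a + u·a⁻¹·c); if a + u·a⁻¹·c = 0, then σ(n, b) · σ(w, n·b) = (u·a, u·c). In particular, in the metaplectic double cover, ⟨w, 1⟩⟨n, 1⟩⟨b, 1⟩ = ⟨w·n·b, ε⟩ with ε equal to the stated Hilbert symbol. -/

import Mathlib

open scoped Classical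

/-- The quadratic Hilbert symbol over `ℚ_p`: `1` if `z² = a·x² + b·y²` has a nonzero
solution, `-1` otherwise. -/
noncomputable def hilbertSym (p : ℕ) [Fact p.Prime] (a b : ℚ_[p]) : ℤ :=
  if ∃ x y z : ℚ_[p], (x, y, z) ≠ (0, 0, 0) ∧ z ^ 2 = a * x ^ 2 + b * y ^ 2 then 1 else -1

/-- Kubota's function `x(g)`: the lower-left entry if nonzero, else the lower-right entry. -/
noncomputable def kubotaX (p : ℕ) [Fact p.Prime] (g : Matrix (Fin 2) (Fin 2) ℚ_[p]) : ℚ_[p] :=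
  if g 1 0 ≠ 0 then g 1 0 else g 1 1

/-- Kubota's 2-cocycle on `SL₂(ℚ_p)`. -/
noncomputable def kubota (p : ℕ) [Fact p.Prime]
    (g g' : Matrix.SpecialLinearGroup (Fin 2) ℚ_[p]) : ℤ :=
  hilbertSym p (kubotaX p ↑(g * g') / kubotaX p ↑g) (kubotaX p ↑(g * g') / kubotaX p ↑g')

/-- The lower-triangular element `b = (a 0; a⁻¹c a⁻¹)` of `SL₂(ℚ_p)`. -/
noncomputable def bMat (p : ℕ) [Fact p.Prime] (a c : ℚ_[p]) (ha : a ≠ 0) :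
    Matrix.SpecialLinearGroup (Fin 2) ℚ_[p] :=
  ⟨!![a, 0; a⁻¹ * c, a⁻¹], by rw [Matrix.det_fin_two_of]; field_simp; ring⟩

/-- The upper-unipotent element `n = (1 u; 0 1)` of `SL₂(ℚ_p)`. -/
noncomputable def nMat (p : ℕ) [Fact p.Prime] (u : ℚ_[p]) : Matrix.SpecialLinearGroup (Fin 2) ℚ_[p] :=
  ⟨!![1, u; 0, 1], by rw [Matrix.det_fin_two_of]; ring⟩

/-- The Weyl element `w = (0 −1; 1 0)` of `SL₂(ℚ_p)`. -/
noncomputable def wMat (p : ℕ) [Fact p.Prime] : Matrix.SpecialLinearGroup (Fin 2) ℚ_[p] :=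
  ⟨!![0, -1; 1, 0], by rw [Matrix.det_fin_two_of]; ring⟩

/-- The solvability predicate underlying `hilbertSym`. -/
def HSsol (p : ℕ) [Fact p.Prime] (a b : ℚ_[p]) : Prop :=
  ∃ x y z : ℚ_[p], (x, y, z) ≠ (0, 0, 0) ∧ z ^ 2 = a * x ^ 2 + b * y ^ 2

lemma hilbertSym_congr {p : ℕ} [Fact p.Prime] {A B A' B' : ℚ_[p]}
    (h : HSsol p A B ↔ HSsol p A' B') : hilbertSym p A B = hilbertSym p A' B' := by
  unfold hilbertSym
  exact if_congr h rfl rfl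

lemma ne_triple {p : ℕ} [Fact p.Prime] {x y z : ℚ_[p]} :
    (x, y, z) ≠ (0, 0, 0) ↔ ¬(x = 0 ∧ y = 0 ∧ z = 0) := by
  simp [Prod.ext_iff]

lemma HSsol.scale {p : ℕ} [Fact p.Prime] {A B : ℚ_[p]} (α β : ℚ_[p]) (hα : α ≠ 0) (hβ : β ≠ 0)
    (h : HSsol p A B) : HSsol p (A * α ^ 2) (B * β ^ 2) := by
  obtain ⟨x, y, z, hne, heq⟩ := h
  refine ⟨x / α, y / β, z, ?_, ?_⟩
  · rw [ne_triple] at hne ⊢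
    intro ⟨h1, h2, h3⟩
    exact hne ⟨by field_simp at h1; simpa using h1, by field_simp at h2; simpa using h2, h3⟩
  · field_simp
    linear_combination heq

lemma HSsol_scale_iff {p : ℕ} [Fact p.Prime] {A B : ℚ_[p]} (α β : ℚ_[p]) (hα : α ≠ 0) (hβ : β ≠ 0) :
    HSsol p (A * α ^ 2) (B * β ^ 2) ↔ HSsol p A B := by
  constructor
  · intro h
    have := h.scale α⁻¹ β⁻¹ (inv_ne_zero hα) (inv_ne_zero hβ)
    have e1 : A * α ^ 2 * α⁻¹ ^ 2 = A := by field_simp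
    have e2 : B * β ^ 2 * β⁻¹ ^ 2 = B := by field_simp
    rwa [e1, e2] at this
  · exact fun h => h.scale α β hα hβ

lemma HSsol_one {p : ℕ} [Fact p.Prime] (A : ℚ_[p]) : HSsol p A 1 :=
  ⟨0, 1, 1, by simp [ne_triple], by ring⟩

lemma hilbertSym_one {p : ℕ} [Fact p.Prime] (A : ℚ_[p]) : hilbertSym p A 1 = 1 := by
  unfold hilbertSym
  exact if_pos (HSsol_one A)

lemma HSsol_key {p : ℕ} [Fact p.Prime] {t s : ℚ_[p]} (ht : t ≠ 0) (hs : s ≠ 0) :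
    HSsol p t (t * s) ↔ HSsol p (-s) t := by
  constructor
  · rintro ⟨x, y, z, hne, heq⟩
    by_cases hd : x ^ 2 + s * y ^ 2 = 0
    · -- then z = 0 and -s = (x/y)^2
      have hz : z = 0 := by
        have : z ^ 2 = 0 := by linear_combination heq + t * hd
        exact pow_eq_zero_iff (two_ne_zero) |>.mp this
      have hy : y ≠ 0 := by
        intro hy0
        have hx : x = 0 := by
          have : x ^ 2 = 0 := by linear_combination hd - s * y * hy0
          exact pow_eq_zero_iff (two_ne_zero) |>.mp this
        exact (ne_triple.mp hne) ⟨hx, hy0, hz⟩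
      refine ⟨1, 0, x / y, by simp [ne_triple], ?_⟩
      field_simp
      linear_combination hd
    · refine ⟨z * y / (x ^ 2 + s * y ^ 2), 1, z * x / (x ^ 2 + s * y ^ 2), by simp [ne_triple], ?_⟩
      field_simp
      linear_combination (x ^ 2 + s * y ^ 2) * heq
  · rintro ⟨X, Y, Z, hne, heq⟩
    by_cases hY : Y = 0
    · subst hY
      have hX : X ≠ 0 := by
        intro hX0
        have hZ : Z = 0 := by
          have : Z ^ 2 = 0 := by rw [heq, hX0]; ring
          exact pow_eq_zero_iff (two_ne_zero) |>.mp this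
        exact (ne_triple.mp hne) ⟨hX0, rfl, hZ⟩
      refine ⟨Z / X, 1, 0, by simp [ne_triple], ?_⟩
      field_simp
      linear_combination -t * heq
    · refine ⟨Z, X, t * Y, by simp [ne_triple, mul_ne_zero ht hY], ?_⟩
      linear_combination -t * heq

lemma kubotaX_fin (p : ℕ) [Fact p.Prime] (A B C D : ℚ_[p]) :
    kubotaX p !![A, B; C, D] = if C ≠ 0 then C else D := by
  simp [kubotaX]

/-- The value of `σ(n, b)·σ(w, n·b)`, the sign `ε` with `⟨w,1⟩⟨n,1⟩⟨b,1⟩ = ⟨wnb, ε⟩` in the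
metaplectic cover: it is `(−a·c, a + u·a⁻¹·c)` if `a + u·a⁻¹·c ≠ 0`, and `(u·a, u·c)`
otherwise. -/
theorem kubota_w_n_b (p : ℕ) [Fact p.Prime] (a c : ℚ_[p]) (ha : a ≠ 0) (hc : c ≠ 0)
    (u : ℚ_[p]) :
    (a + u * a⁻¹ * c ≠ 0 →
      kubota p (nMat p u) (bMat p a c ha) * kubota p (wMat p) (nMat p u * bMat p a c ha) =
        hilbertSym p (-(a * c)) (a + u * a⁻¹ * c)) ∧
    (a + u * a⁻¹ * c = 0 →
      kubota p (nMat p u) (bMat p a c ha) * kubota p (wMat p) (nMat p u * bMat p a c ha) =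
        hilbertSym p (u * a) (u * c)) := by
  have hac : a⁻¹ * c ≠ 0 := mul_ne_zero (inv_ne_zero ha) hc
  -- the matrix of n * b
  have hnb : ((nMat p u * bMat p a c ha : Matrix.SpecialLinearGroup (Fin 2) ℚ_[p]) :
      Matrix (Fin 2) (Fin 2) ℚ_[p]) = !![a + u * a⁻¹ * c, u * a⁻¹; a⁻¹ * c, a⁻¹] := by
    rw [Matrix.SpecialLinearGroup.coe_mul]
    show (!![1, u; 0, 1] : Matrix (Fin 2) (Fin 2) ℚ_[p]) * !![a, 0; a⁻¹ * c, a⁻¹] = _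
    rw [Matrix.mul_fin_two]
    ext i j
    fin_cases i <;> fin_cases j <;> (simp; try ring)
  -- the matrix of w * (n * b)
  have hwnb : ((wMat p * (nMat p u * bMat p a c ha) : Matrix.SpecialLinearGroup (Fin 2) ℚ_[p]) :
      Matrix (Fin 2) (Fin 2) ℚ_[p]) =
      !![-(a⁻¹ * c), -a⁻¹; a + u * a⁻¹ * c, u * a⁻¹] := by
    rw [Matrix.SpecialLinearGroup.coe_mul, hnb]
    show (!![0, -1; 1, 0] : Matrix (Fin 2) (Fin 2) ℚ_[p]) * _ = _
    rw [Matrix.mul_fin_two]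
    ext i j
    fin_cases i <;> fin_cases j <;> (simp; try ring)
  -- kubotaX values
  have xn : kubotaX p ((nMat p u : Matrix.SpecialLinearGroup (Fin 2) ℚ_[p]) :
      Matrix (Fin 2) (Fin 2) ℚ_[p]) = 1 := by
    show kubotaX p !![1, u; 0, 1] = 1
    rw [kubotaX_fin]; simp
  have xb : kubotaX p ((bMat p a c ha : Matrix.SpecialLinearGroup (Fin 2) ℚ_[p]) :
      Matrix (Fin 2) (Fin 2) ℚ_[p]) = a⁻¹ * c := by
    show kubotaX p !![a, 0; a⁻¹ * c, a⁻¹] = a⁻¹ * c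
    rw [kubotaX_fin, if_pos hac]
  have xw : kubotaX p ((wMat p : Matrix.SpecialLinearGroup (Fin 2) ℚ_[p]) :
      Matrix (Fin 2) (Fin 2) ℚ_[p]) = 1 := by
    show kubotaX p !![0, -1; 1, 0] = 1
    rw [kubotaX_fin, if_pos one_ne_zero]
  have xnb : kubotaX p ((nMat p u * bMat p a c ha : Matrix.SpecialLinearGroup (Fin 2) ℚ_[p]) :
      Matrix (Fin 2) (Fin 2) ℚ_[p]) = a⁻¹ * c := by
    rw [hnb, kubotaX_fin, if_pos hac]
  -- σ(n, b) = 1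
  have k1 : kubota p (nMat p u) (bMat p a c ha) = 1 := by
    unfold kubota
    rw [xn, xb, xnb, div_one, div_self hac, hilbertSym_one]
  refine ⟨fun ht => ?_, fun ht => ?_⟩
  · -- nondegenerate case
    have k2 : kubota p (wMat p) (nMat p u * bMat p a c ha) =
        hilbertSym p (a + u * a⁻¹ * c) ((a + u * a⁻¹ * c) / (a⁻¹ * c)) := by
      unfold kubota
      rw [xw, xnb, hwnb, kubotaX_fin, if_pos ht, div_one]
    rw [k1, k2, one_mul]
    apply hilbertSym_congr
    have e : (a + u * a⁻¹ * c) / (a⁻¹ * c) = (a + u * a⁻¹ * c) * (a * c) * c⁻¹ ^ 2 := by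
      field_simp
    have e2 : (a + u * a⁻¹ * c) = (a + u * a⁻¹ * c) * 1 ^ 2 := by ring
    rw [e]
    calc HSsol p (a + u * a⁻¹ * c) ((a + u * a⁻¹ * c) * (a * c) * c⁻¹ ^ 2)
        ↔ HSsol p ((a + u * a⁻¹ * c) * 1 ^ 2) ((a + u * a⁻¹ * c) * (a * c) * c⁻¹ ^ 2) := by
          rw [← e2]
      _ ↔ HSsol p (a + u * a⁻¹ * c) ((a + u * a⁻¹ * c) * (a * c)) :=
          HSsol_scale_iff 1 c⁻¹ one_ne_zero (inv_ne_zero hc)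
      _ ↔ HSsol p (-(a * c)) (a + u * a⁻¹ * c) := HSsol_key ht (mul_ne_zero ha hc)
  · -- degenerate case
    have hu : u ≠ 0 := by
      intro hu0
      apply ha
      have := ht
      rw [hu0] at this
      simpa using this
    have k2 : kubota p (wMat p) (nMat p u * bMat p a c ha) =
        hilbertSym p (u * a⁻¹) ((u * a⁻¹) / (a⁻¹ * c)) := by
      unfold kubota
      rw [xw, xnb, hwnb, kubotaX_fin, if_neg (by simpa using ht), div_one]
    rw [k1, k2, one_mul]
    apply hilbertSym_congr
    have e1 : u * a⁻¹ = (u * a) * a⁻¹ ^ 2 := by field_simp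
    have e2 : (u * a⁻¹) / (a⁻¹ * c) = (u * c) * c⁻¹ ^ 2 := by
      field_simp
    rw [e2, e1]
    exact HSsol_scale_iff a⁻¹ c⁻¹ (inv_ne_zero ha) (inv_ne_zero hc)
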